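/- Let X be a simplicial set, G a simplicial group, and τ : X_{>0} → G a twisting function. Let n ≥ 1, 0 ≤ p ≤ n, x ∈ X_n, i ∈ S_n, and set (j, q) = Φ(i, p). Then Sz_i(s_p x) = s_q(Sz_j x) in G_n. -/

import Mathlib

open CategoryTheory

/-- `memS n l i` means `i ∈ S_{n,l}`: a sequence of length `l` with
`0 ≤ i_s ≤ n - s` for `1 ≤ s ≤ l` (here `i.getD t 0` is the entry `i_{t+1}`). -/
def memS (n l : ℕ) (i : List ℕ) : Prop :=
  i.length = l ∧ ∀ t < l, i.getD t 0 + t + 1 ≤ n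

/-- The ordered set remaining from `{0, …, n}` after performing the first `r`
removal steps prescribed by `i`: at each step the element at (0-indexed)
position `i_r + 1` of the remaining set is removed. -/
def restAfter (n : ℕ) (i : List ℕ) (r : ℕ) : List ℕ :=
  (i.take r).foldl (fun L a => L.eraseIdx (a + 1)) (List.range (n + 1))

/-- The ordered set remaining from `{0, …, n}` after the whole removal
procedure prescribed by `i`. -/
def restList (n : ℕ) (i : List ℕ) : List ℕ := restAfter n i i.length

/-- The element `e_{r+1}` removed at (0-indexed) step `r` of the removal
procedure on `{0, …, n}` prescribed by `i`. -/
def elemRemoved (n : ℕ) (i : List ℕ) (r : ℕ) : ℕ :=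
  (restAfter n i r).getD (i.getD r 0 + 1) 0

/-- The component `α_s` of `Ψ_p(i)`, for the interval `(a, b) = (p_{s-1}, p_s)`:
the set of (0-indexed) steps at which an element strictly between `a` and `b`
is removed. -/
def psiAlpha (n : ℕ) (i : List ℕ) (a b : ℕ) : Finset ℕ :=
  (Finset.range i.length).filter
    (fun r => a < elemRemoved n i r ∧ elemRemoved n i r < b)

/-- The component `j_s` of `Ψ_p(i)`, for the interval `(a, b) = (p_{s-1}, p_s)`:
its `u`-th entry is `w - 1` where the `u`-th element of `(a, b)` to be removed
is, at the moment of its removal, the `w`-th smallest element of `(a, b)` still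
present. -/
def psiJ (n : ℕ) (i : List ℕ) (a b : ℕ) : List ℕ :=
  ((List.range i.length).filter
      (fun r => decide (a < elemRemoved n i r ∧ elemRemoved n i r < b))).map
    (fun r => ((restAfter n i r).filter
      (fun y => decide (a < y ∧ y < elemRemoved n i r))).length)

/-- `α` is a `(q_0, …, q_{k-1})`-shuffle: an ordered partition of
`{0, …, q_0 + ⋯ + q_{k-1} - 1}` with `|α_s| = q_s`. -/
def IsShuffleF {k : ℕ} (q : Fin k → ℕ) (α : Fin k → Finset ℕ) : Prop :=
  (∀ s, (α s).card = q s) ∧ (∀ s t, s ≠ t → Disjoint (α s) (α t)) ∧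
    Finset.univ.biUnion α = Finset.range (∑ s, q s)

/-- The sign exponent `(α)` of a shuffle: the number of pairs `(a, b)` with
`a ∈ α_s`, `b ∈ α_t`, `s < t` and `a > b`. -/
def shuffleExpN (k : ℕ) (α : ℕ → Finset ℕ) : ℕ :=
  ∑ s ∈ Finset.range k, ∑ t ∈ Finset.range k,
    if s < t then ∑ a ∈ α s, ((α t).filter (fun b => b < a)).card else 0

/-- Vertex map of the derived operator. -/
def derivedFun (f : ℕ → ℕ) : ℕ → ℕ := fun t => if t = 0 then 0 else f (t - 1) + 1

/-- Vertex map of the face map `δ_j`. -/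
def deltaFun (j : ℕ) : ℕ → ℕ := fun t => if t < j then t else t + 1

/-- Vertex map of the degeneracy map `σ_j`. -/
def sigmaFun (j : ℕ) : ℕ → ℕ := fun t => if t ≤ j then t else t - 1

/-- Vertex map of the Szczarba operator `D_i^k`. -/
def DFun : List ℕ → ℕ → ℕ → ℕ
  | [], _ => id
  | (i1 :: i'), k =>
    if k < i1 then deltaFun (i1 - k) ∘ sigmaFun 0 ∘ derivedFun (DFun i' k)
    else if k = i1 then derivedFun (DFun i' k)
    else sigmaFun 0 ∘ derivedFun (DFun i' (k - 1))

/-- The morphism `[b] ⟶ [a]` in the simplex category whose vertex map is (the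
monotone clamped version of) `f`.  When `f` is monotone and maps `[b]` into `[a]`
this is exactly the morphism with vertex map `f`. -/
def mkHomF (a b : ℕ) (f : ℕ → ℕ) : (SimplexCategory.mk b ⟶ SimplexCategory.mk a) :=
  SimplexCategory.mkHom
    { toFun := fun t => ⟨min ((Finset.range (t.1 + 1)).sup f) a,
        Nat.lt_succ_of_le (min_le_right _ _)⟩
      monotone' := fun u v huv => by
        simp only [Fin.mk_le_mk]
        exact min_le_min
          (Finset.sup_mono (Finset.range_subset_range.mpr (Nat.succ_le_succ huv))) le_rfl }

section

open Simplicial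

/-- The natural simplicial operator `X_a → X_b` with vertex map `f : [b] → [a]`. -/
def simpOp (X : SSet) (f : ℕ → ℕ) (a b : ℕ) (x : X _⦋a⦌) : X _⦋b⦌ :=
  X.map (mkHomF a b f).op x

/-- The natural simplicial operator `G_a → G_b` with vertex map `f : [b] → [a]`,
for a simplicial group `G`. -/
def grpOp (G : CategoryTheory.SimplicialObject GrpCat) (f : ℕ → ℕ) (a b : ℕ)
    (g : G _⦋a⦌) : G _⦋b⦌ :=
  (G.map (mkHomF a b f).op) g

/-- A twisting function `τ : X_{>0} → G`. -/
structure TwistingFn (X : SSet) (G : CategoryTheory.SimplicialObject GrpCat) where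
  map : ∀ n : ℕ, X _⦋n + 1⦌ → G _⦋n⦌
  d0 : ∀ (n : ℕ) (x : X _⦋n + 2⦌),
    grpOp G (deltaFun 0) (n + 1) n (map (n + 1) x)
      = (map n (simpOp X (deltaFun 0) (n + 2) (n + 1) x))⁻¹
        * map n (simpOp X (deltaFun 1) (n + 2) (n + 1) x)
  dk : ∀ (n k : ℕ) (x : X _⦋n + 2⦌), 0 < k → k < n + 2 →
    grpOp G (deltaFun k) (n + 1) n (map (n + 1) x)
      = map n (simpOp X (deltaFun (k + 1)) (n + 2) (n + 1) x)
  sk : ∀ (n k : ℕ) (x : X _⦋n + 1⦌), k < n + 1 →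
    grpOp G (sigmaFun k) n (n + 1) (map n x)
      = map (n + 1) (simpOp X (sigmaFun (k + 1)) (n + 1) (n + 2) x)
  s0 : ∀ (n : ℕ) (x : X _⦋n⦌), map n (simpOp X (sigmaFun 0) n (n + 1) x) = 1

/-- Szczarba's operator `Sz_i : X_{n+1} → G_n`. -/
def Sz {X : SSet} {G : CategoryTheory.SimplicialObject GrpCat} (τ : TwistingFn X G)
    (n : ℕ) (i : List ℕ) (x : X _⦋n + 1⦌) : G _⦋n⦌ :=
  ((List.range (n + 1)).map (fun r =>
    grpOp G (DFun i r) (n - r) n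
      ((τ.map (n - r) (simpOp X (fun t => t + r) (n + 1) ((n - r) + 1) x))⁻¹))).prod

/-- The group component of the operator `hatSz_i : X_n → X_n × G_n`. -/
def hatSzG {X : SSet} {G : CategoryTheory.SimplicialObject GrpCat} (τ : TwistingFn X G)
    (n : ℕ) (i : List ℕ) (x : X _⦋n⦌) : G _⦋n⦌ :=
  ((List.range n).map (fun r =>
    grpOp G (DFun i (r + 1)) (n - (r + 1)) n
      ((τ.map (n - (r + 1)) (simpOp X (fun t => t + r) n ((n - (r + 1)) + 1) x))⁻¹))).prod

/-- Szczarba's operator `hatSz_i : X_n → (X ×_τ G)_n = X_n × G_n`. -/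
def hatSz {X : SSet} {G : CategoryTheory.SimplicialObject GrpCat} (τ : TwistingFn X G)
    (n : ℕ) (i : List ℕ) (x : X _⦋n⦌) : X _⦋n⦌ × G _⦋n⦌ :=
  (simpOp X (DFun i 0) n n x, hatSzG τ n i x)

end

/-- The `r`-fold iterate of the zeroth face map of the twisted Cartesian
product `X ×_τ G`. -/
def twD0pow {X : SSet} {G : CategoryTheory.SimplicialObject GrpCat} (τ : TwistingFn X G) :
    (r : ℕ) → (m : ℕ) → X.obj (Opposite.op (SimplexCategory.mk (m + r))) ×
      (G.obj (Opposite.op (SimplexCategory.mk (m + r))) : Type _) →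
      X.obj (Opposite.op (SimplexCategory.mk m)) × (G.obj (Opposite.op (SimplexCategory.mk m)) : Type _)
  | 0, _, z => z
  | r + 1, m, z =>
      twD0pow τ r m
        (simpOp X (deltaFun 0) (m + r + 1) (m + r) z.1,
         τ.map (m + r) z.1 * grpOp G (deltaFun 0) (m + r + 1) (m + r) z.2)

/-- Vertex map of the iterated degeneracy `s_B` on a finite set `B`. -/
def degenFun (B : Finset ℕ) : ℕ → ℕ := fun t => t - (B.filter (fun b => b < t)).card

/-- The map `Φ : S_n × [n] → S_{n-1} × [n-1]`. -/
def Phi : List ℕ → ℕ → List ℕ × ℕ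
  | [], _ => ([], 0)
  | (i1 :: i'), p =>
    if p < i1 then ((i1 - 1) :: (Phi i' p).1, (Phi i' p).2 + 1)
    else if p = i1 ∨ p = i1 + 1 then (i', 0)
    else (i1 :: (Phi i' (p - 1)).1, (Phi i' (p - 1)).2 + 1)

open Simplicial

section Aux

/-! ### Elementary facts about the vertex-map combinatorics -/

lemma sigmaFun_zero_succ (a : ℕ) : sigmaFun 0 (a + 1) = a := by simp [sigmaFun]

lemma sigmaFun_apply_zero (q : ℕ) : sigmaFun q 0 = 0 := by simp [sigmaFun]

lemma derivedFun_zero (f : ℕ → ℕ) : derivedFun f 0 = 0 := by simp [derivedFun]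

lemma derivedFun_succ (f : ℕ → ℕ) (u : ℕ) : derivedFun f (u + 1) = f u + 1 := by
  simp [derivedFun]

lemma derived_sigma (g : ℕ → ℕ) (q u : ℕ) :
    derivedFun g (sigmaFun (q + 1) (u + 1)) = g (sigmaFun q u) + 1 := by
  by_cases h : u ≤ q
  · have h1 : u + 1 ≤ q + 1 := by omega
    simp [sigmaFun, derivedFun, h, h1]
  · have h1 : ¬ (u + 1 ≤ q + 1) := by omega
    have hu : 1 ≤ u := by omega
    simp only [sigmaFun, if_neg h1, if_neg h]
    have : u + 1 - 1 = (u - 1) + 1 := by omega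
    rw [this, derivedFun_succ]

lemma DFun_lt {i1 k : ℕ} (i' : List ℕ) (h : k < i1) (t : ℕ) :
    DFun (i1 :: i') k t = deltaFun (i1 - k) (sigmaFun 0 (derivedFun (DFun i' k) t)) := by
  simp [DFun, h]

lemma DFun_eq {i1 k : ℕ} (i' : List ℕ) (h : k = i1) (t : ℕ) :
    DFun (i1 :: i') k t = derivedFun (DFun i' k) t := by
  simp [DFun, h]

lemma DFun_gt {i1 k : ℕ} (i' : List ℕ) (h : i1 < k) (t : ℕ) :
    DFun (i1 :: i') k t = sigmaFun 0 (derivedFun (DFun i' (k - 1)) t) := by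
  have h1 : ¬ k < i1 := by omega
  have h2 : ¬ k = i1 := by omega
  simp [DFun, h1, h2]

lemma Phi_lt {i1 p : ℕ} (i' : List ℕ) (h : p < i1) :
    Phi (i1 :: i') p = ((i1 - 1) :: (Phi i' p).1, (Phi i' p).2 + 1) := by
  simp [Phi, h]

lemma Phi_mid {i1 p : ℕ} (i' : List ℕ) (h : p = i1 ∨ p = i1 + 1) :
    Phi (i1 :: i') p = (i', 0) := by
  have h1 : ¬ p < i1 := by omega
  simp [Phi, h1, h]

lemma Phi_gt {i1 p : ℕ} (i' : List ℕ) (h : i1 + 1 < p) :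
    Phi (i1 :: i') p = (i1 :: (Phi i' (p - 1)).1, (Phi i' (p - 1)).2 + 1) := by
  have h1 : ¬ p < i1 := by omega
  have h2 : ¬ (p = i1 ∨ p = i1 + 1) := by omega
  simp [Phi, h1, h2]

lemma DFun_apply_zero : ∀ (i : List ℕ) (k : ℕ), DFun i k 0 = 0 := by
  intro i
  induction i with
  | nil => intro k; rfl
  | cons i1 i' ih =>
    intro k
    rcases lt_trichotomy k i1 with h | h | h
    · rw [DFun_lt i' h, derivedFun_zero, sigmaFun_apply_zero]
      have : 0 < i1 - k := by omega
      simp [deltaFun, this]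
    · rw [DFun_eq i' h, derivedFun_zero]
    · rw [DFun_gt i' h, derivedFun_zero, sigmaFun_apply_zero]

lemma memS_cons {l i1 : ℕ} {i' : List ℕ} :
    memS (l + 1) (l + 1) (i1 :: i') ↔ i1 ≤ l ∧ memS l l i' := by
  constructor
  · rintro ⟨hlen, hb⟩
    refine ⟨by have := hb 0 (by omega); simpa using this, by simpa using hlen, ?_⟩
    intro t ht
    have := hb (t + 1) (by omega)
    simp only [List.getD_cons_succ] at this
    omega
  · rintro ⟨h1, hlen, hb⟩
    refine ⟨by simpa using hlen, ?_⟩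
    intro t ht
    cases t with
    | zero => simpa using h1
    | succ u =>
      have := hb u (by omega)
      simp only [List.getD_cons_succ]
      omega

lemma monotone_sigmaFun (j : ℕ) : Monotone (sigmaFun j) := by
  intro a b h; simp only [sigmaFun]; split_ifs <;> omega

lemma monotone_deltaFun (j : ℕ) : Monotone (deltaFun j) := by
  intro a b h; simp only [deltaFun]; split_ifs <;> omega

lemma monotone_derivedFun {f : ℕ → ℕ} (hf : Monotone f) : Monotone (derivedFun f) := by
  intro a b h
  cases a with
  | zero => simp [derivedFun]
  | succ a' =>
    cases b with
    | zero => omega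
    | succ b' =>
      rw [derivedFun_succ, derivedFun_succ]
      exact Nat.add_le_add_right (hf (by omega)) 1

lemma monotone_DFun : ∀ (i : List ℕ) (k : ℕ), Monotone (DFun i k) := by
  intro i
  induction i with
  | nil => intro k; exact fun a b h => h
  | cons i1 i' ih =>
    intro k
    rcases lt_trichotomy k i1 with h | h | h
    · intro a b hab
      rw [DFun_lt i' h, DFun_lt i' h]
      exact monotone_deltaFun _ (monotone_sigmaFun _ (monotone_derivedFun (ih k) hab))
    · intro a b hab
      rw [DFun_eq i' h, DFun_eq i' h]
      exact monotone_derivedFun (ih k) hab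
    · intro a b hab
      rw [DFun_gt i' h, DFun_gt i' h]
      exact monotone_sigmaFun _ (monotone_derivedFun (ih (k - 1)) hab)

lemma DFun_bound : ∀ (i : List ℕ) (n k t : ℕ), memS n n i → k ≤ n → t ≤ n →
    DFun i k t ≤ n - k := by
  intro i
  induction i with
  | nil =>
    intro n k t hi hk ht
    have hn : n = 0 := by simpa [memS] using hi.1.symm
    subst hn
    interval_cases k
    simpa [DFun] using ht
  | cons i1 i' ih =>
    intro n k t hi hk ht
    have hn : n = i'.length + 1 := by
      have := hi.1; simp at this; omega
    subst hn
    obtain ⟨h1, hi'⟩ := memS_cons.mp hi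
    rcases lt_trichotomy k i1 with h | h | h
    · rw [DFun_lt i' h]
      cases t with
      | zero =>
        rw [derivedFun_zero, sigmaFun_apply_zero]
        simp only [deltaFun]; split_ifs <;> omega
      | succ u =>
        rw [derivedFun_succ, sigmaFun_zero_succ]
        have ha := ih i'.length k u hi' (by omega) (by omega)
        simp only [deltaFun]; split_ifs <;> omega
    · rw [DFun_eq i' h]
      cases t with
      | zero => rw [derivedFun_zero]; omega
      | succ u =>
        rw [derivedFun_succ]
        have ha := ih i'.length k u hi' (by omega) (by omega)
        omega
    · rw [DFun_gt i' h]
      cases t with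
      | zero => rw [derivedFun_zero, sigmaFun_apply_zero]; omega
      | succ u =>
        rw [derivedFun_succ, sigmaFun_zero_succ]
        have ha := ih i'.length (k - 1) u hi' (by omega) (by omega)
        omega

lemma Phi_spec : ∀ (i : List ℕ) (n p : ℕ), memS (n + 1) (n + 1) i → p ≤ n + 1 →
    memS n n (Phi i p).1 ∧ (Phi i p).2 ≤ n := by
  intro i
  induction i with
  | nil =>
    intro n p hi _
    exact absurd hi.1 (by simp)
  | cons i1 i' ih =>
    intro n p hi hp
    obtain ⟨h1, hi'⟩ := memS_cons.mp hi
    rcases lt_trichotomy p i1 with h | h | h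
    · rw [Phi_lt i' h]
      obtain ⟨n', hn'⟩ : ∃ n', n = n' + 1 := ⟨n - 1, by omega⟩
      subst hn'
      obtain ⟨hm, hq⟩ := ih n' p hi' (by omega)
      exact ⟨memS_cons.mpr ⟨by omega, hm⟩, by omega⟩
    · rw [Phi_mid i' (Or.inl h)]
      exact ⟨hi', by omega⟩
    · by_cases h2 : p = i1 + 1
      · rw [Phi_mid i' (Or.inr h2)]
        exact ⟨hi', by omega⟩
      · have h3 : i1 + 1 < p := by omega
        rw [Phi_gt i' h3]
        obtain ⟨n', hn'⟩ : ∃ n', n = n' + 1 := ⟨n - 1, by omega⟩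
        subst hn'
        obtain ⟨hm, hq⟩ := ih n' (p - 1) hi' (by omega)
        exact ⟨memS_cons.mpr ⟨by omega, hm⟩, by omega⟩

end Aux

section Key

/-- Key identity B: for `r < p`, `σ_{p-r-1} ∘ D_i^r = D_j^r ∘ σ_q` pointwise. -/
lemma keyB : ∀ (i : List ℕ) (p r : ℕ), memS i.length i.length i → p ≤ i.length →
    r < p → ∀ t, sigmaFun (p - r - 1) (DFun i r t)
      = DFun (Phi i p).1 r (sigmaFun (Phi i p).2 t) := by
  intro i
  induction i with
  | nil => intro p r _ hp hr; simp at hp; omega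
  | cons i1 i' ih =>
    intro p r hi hp hr
    have hlen : (i1 :: i').length = i'.length + 1 := by simp
    rw [hlen] at hi hp
    obtain ⟨h1, hi'⟩ := memS_cons.mp hi
    rcases lt_trichotomy p i1 with h | h | h
    · -- p < i1, so r < p < i1
      rw [Phi_lt i' h]
      have hri : r < i1 := by omega
      have hrj : r < i1 - 1 := by omega
      intro t
      rw [DFun_lt i' hri t]
      cases t with
      | zero =>
        simp only [derivedFun_zero, sigmaFun_apply_zero, DFun_apply_zero]
        all_goals first
        | rfl
        | (simp only [deltaFun, sigmaFun]; split_ifs <;> omega)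
      | succ u =>
        rw [DFun_lt _ hrj, derived_sigma, sigmaFun_zero_succ,
          derivedFun_succ, sigmaFun_zero_succ]
        rw [← ih p r hi' (by omega) hr u]
        have a := DFun i' r u
        simp only [deltaFun, sigmaFun]; split_ifs <;> omega
    · -- p = i1
      rw [Phi_mid i' (Or.inl h)]
      have hri : r < i1 := by omega
      intro t
      rw [DFun_lt i' hri t]
      cases t with
      | zero =>
        simp only [derivedFun_zero, sigmaFun_apply_zero, DFun_apply_zero]
        all_goals first
        | rfl
        | (simp only [deltaFun, sigmaFun]; split_ifs <;> omega)
      | succ u =>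
        rw [derivedFun_succ, sigmaFun_zero_succ]
        have hs : sigmaFun 0 (u + 1) = u := sigmaFun_zero_succ u
        rw [hs]
        simp only [deltaFun, sigmaFun]; split_ifs <;> omega
    · -- i1 < p
      by_cases h2 : p = i1 + 1
      · rw [Phi_mid i' (Or.inr h2)]
        by_cases hri : r < i1
        · intro t
          rw [DFun_lt i' hri t]
          cases t with
          | zero =>
            simp only [derivedFun_zero, sigmaFun_apply_zero, DFun_apply_zero]
            all_goals first
            | rfl
            | (simp only [deltaFun, sigmaFun]; split_ifs <;> omega)
          | succ u =>
            rw [derivedFun_succ, sigmaFun_zero_succ, sigmaFun_zero_succ]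
            simp only [deltaFun, sigmaFun]; split_ifs <;> omega
        · have hre : r = i1 := by omega
          intro t
          rw [DFun_eq i' hre t]
          cases t with
          | zero =>
            simp only [derivedFun_zero, sigmaFun_apply_zero, DFun_apply_zero]
            all_goals first
            | rfl
            | (simp only [deltaFun, sigmaFun]; split_ifs <;> omega)
          | succ u =>
            rw [derivedFun_succ, sigmaFun_zero_succ]
            have : p - r - 1 = 0 := by omega
            rw [this, sigmaFun_zero_succ]
      · have h3 : i1 + 1 < p := by omega
        rw [Phi_gt i' h3]
        rcases lt_trichotomy r i1 with hri | hri | hri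
        · intro t
          rw [DFun_lt i' hri t, DFun_lt _ hri]
          cases t with
          | zero =>
            simp only [derivedFun_zero, sigmaFun_apply_zero, DFun_apply_zero]
            all_goals first
            | rfl
            | (simp only [deltaFun, sigmaFun]; split_ifs <;> omega)
          | succ u =>
            rw [derived_sigma, sigmaFun_zero_succ, derivedFun_succ, sigmaFun_zero_succ]
            rw [← ih (p - 1) r hi' (by omega) (by omega) u]
            have hpr : p - 1 - r - 1 = p - r - 2 := by omega
            rw [hpr]
            simp only [deltaFun, sigmaFun]; split_ifs <;> omega
        · intro t
          rw [DFun_eq i' hri t, DFun_eq _ hri]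
          cases t with
          | zero =>
            simp only [derivedFun_zero, sigmaFun_apply_zero, DFun_apply_zero]
            all_goals first
            | rfl
            | (simp only [deltaFun, sigmaFun]; split_ifs <;> omega)
          | succ u =>
            rw [derivedFun_succ, derived_sigma]
            rw [← ih (p - 1) r hi' (by omega) (by omega) u]
            have hpr : p - 1 - r - 1 = p - r - 2 := by omega
            rw [hpr]
            simp only [sigmaFun]; split_ifs <;> omega
        · intro t
          rw [DFun_gt i' hri t, DFun_gt _ hri]
          cases t with
          | zero =>
            simp only [derivedFun_zero, sigmaFun_apply_zero, DFun_apply_zero]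
            all_goals first
            | rfl
            | (simp only [deltaFun, sigmaFun]; split_ifs <;> omega)
          | succ u =>
            rw [derivedFun_succ, sigmaFun_zero_succ, derived_sigma, sigmaFun_zero_succ]
            rw [← ih (p - 1) (r - 1) hi' (by omega) (by omega) u]
            have hpr : p - 1 - (r - 1) - 1 = p - r - 1 := by omega
            rw [hpr]

/-- Key identity A: for `p + 1 ≤ r ≤ n`, `D_i^r = D_j^{r-1} ∘ σ_q` pointwise. -/
lemma keyA : ∀ (i : List ℕ) (p r : ℕ), memS i.length i.length i → p ≤ i.length →
    p + 1 ≤ r → r ≤ i.length → ∀ t, DFun i r t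
      = DFun (Phi i p).1 (r - 1) (sigmaFun (Phi i p).2 t) := by
  intro i
  induction i with
  | nil => intro p r _ _ h1 h2; simp at h2; omega
  | cons i1 i' ih =>
    intro p r hi hp hr1 hr2
    have hlen : (i1 :: i').length = i'.length + 1 := by simp
    rw [hlen] at hi hp hr2
    obtain ⟨h1, hi'⟩ := memS_cons.mp hi
    rcases lt_trichotomy p i1 with h | h | h
    · rw [Phi_lt i' h]
      rcases lt_trichotomy r i1 with hri | hri | hri
      · have hrj : r - 1 < i1 - 1 := by omega
        intro t
        rw [DFun_lt i' hri t, DFun_lt _ hrj]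
        cases t with
        | zero =>
          simp only [derivedFun_zero, sigmaFun_apply_zero, DFun_apply_zero]
          all_goals first
          | rfl
          | (simp only [deltaFun, sigmaFun]; split_ifs <;> omega)
        | succ u =>
          rw [derivedFun_succ, sigmaFun_zero_succ, derived_sigma, sigmaFun_zero_succ]
          rw [ih p r hi' (by omega) hr1 (by omega) u]
          have : i1 - 1 - (r - 1) = i1 - r := by omega
          rw [this]
      · have hrj : r - 1 = i1 - 1 := by omega
        intro t
        rw [DFun_eq i' hri t, DFun_eq _ hrj]
        cases t with
        | zero =>
          simp only [derivedFun_zero, sigmaFun_apply_zero, DFun_apply_zero]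
          all_goals first
          | rfl
          | (simp only [deltaFun, sigmaFun]; split_ifs <;> omega)
        | succ u =>
          rw [derivedFun_succ, derived_sigma]
          rw [ih p r hi' (by omega) hr1 (by omega) u]
      · have hrj : i1 - 1 < r - 1 := by omega
        intro t
        rw [DFun_gt i' hri t, DFun_gt _ hrj]
        cases t with
        | zero =>
          simp only [derivedFun_zero, sigmaFun_apply_zero, DFun_apply_zero]
          all_goals first
          | rfl
          | (simp only [deltaFun, sigmaFun]; split_ifs <;> omega)
        | succ u =>
          rw [derivedFun_succ, sigmaFun_zero_succ, derived_sigma, sigmaFun_zero_succ]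
          rw [ih p (r - 1) hi' (by omega) (by omega) (by omega) u]
    · rw [Phi_mid i' (Or.inl h)]
      have hri : i1 < r := by omega
      intro t
      rw [DFun_gt i' hri t]
      cases t with
      | zero =>
        simp only [derivedFun_zero, sigmaFun_apply_zero, DFun_apply_zero]
        all_goals first
        | rfl
        | (simp only [deltaFun, sigmaFun]; split_ifs <;> omega)
      | succ u =>
        rw [derivedFun_succ, sigmaFun_zero_succ, sigmaFun_zero_succ]
    · by_cases h2 : p = i1 + 1
      · rw [Phi_mid i' (Or.inr h2)]
        have hri : i1 < r := by omega
        intro t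
        rw [DFun_gt i' hri t]
        cases t with
        | zero =>
          simp only [derivedFun_zero, sigmaFun_apply_zero, DFun_apply_zero]
          all_goals first
          | rfl
          | (simp only [deltaFun, sigmaFun]; split_ifs <;> omega)
        | succ u =>
          rw [derivedFun_succ, sigmaFun_zero_succ, sigmaFun_zero_succ]
      · have h3 : i1 + 1 < p := by omega
        rw [Phi_gt i' h3]
        have hri : i1 < r := by omega
        have hrj : i1 < r - 1 := by omega
        intro t
        rw [DFun_gt i' hri t, DFun_gt _ hrj]
        cases t with
        | zero =>
          simp only [derivedFun_zero, sigmaFun_apply_zero, DFun_apply_zero]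
          all_goals first
          | rfl
          | (simp only [deltaFun, sigmaFun]; split_ifs <;> omega)
        | succ u =>
          rw [derivedFun_succ, sigmaFun_zero_succ, derived_sigma, sigmaFun_zero_succ]
          rw [ih (p - 1) (r - 1) hi' (by omega) (by omega) (by omega) u]

end Key

section Cat

open CategoryTheory

lemma mkHomF_apply (a b : ℕ) (f : ℕ → ℕ) (hf : Monotone f) (t : Fin (b + 1)) :
    ((mkHomF a b f).toOrderHom t).1 = min (f t.1) a := by
  have hsup : (Finset.range (t.1 + 1)).sup f = f t.1 := by
    apply le_antisymm
    · exact Finset.sup_le fun u hu => hf (Nat.lt_succ_iff.mp (Finset.mem_range.mp hu))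
    · exact Finset.le_sup (Finset.mem_range.mpr (Nat.lt_succ_self _))
  simp [mkHomF, SimplexCategory.mkHom, hsup]
  exact congrArg (fun y => min y a) hsup

lemma mkHomF_congr (a b : ℕ) (f g : ℕ → ℕ) (h : ∀ t, f t = g t) :
    mkHomF a b f = mkHomF a b g := by
  have : f = g := funext h
  rw [this]

lemma mkHomF_comp (a b c : ℕ) (f g : ℕ → ℕ) (hf : Monotone f) (hg : Monotone g)
    (hfb : ∀ t, t ≤ b → f t ≤ a) (hgc : ∀ t, t ≤ c → g t ≤ b) :
    mkHomF b c g ≫ mkHomF a b f = mkHomF a c (f ∘ g) := by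
  apply SimplexCategory.Hom.ext
  apply OrderHom.ext
  funext t
  apply Fin.ext
  have h1 : ((mkHomF b c g).toOrderHom t).1 = min (g t.1) b := mkHomF_apply b c g hg t
  have hgt : g t.1 ≤ b := hgc t.1 (Nat.lt_succ_iff.mp t.2)
  have h1' : ((mkHomF b c g).toOrderHom t).1 = g t.1 := by omega
  calc (((mkHomF b c g ≫ mkHomF a b f)).toOrderHom t).1
      = ((mkHomF a b f).toOrderHom ((mkHomF b c g).toOrderHom t)).1 := rfl
    _ = min (f ((mkHomF b c g).toOrderHom t).1) a :=
        mkHomF_apply a b f hf _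
    _ = min (f (g t.1)) a := by rw [h1']
    _ = ((mkHomF a c (f ∘ g)).toOrderHom t).1 :=
        (mkHomF_apply a c (f ∘ g) (hf.comp hg) t).symm

lemma simpOp_comp (X : SSet) (f g : ℕ → ℕ) (a b c : ℕ) (hf : Monotone f)
    (hg : Monotone g) (hfb : ∀ t, t ≤ b → f t ≤ a) (hgc : ∀ t, t ≤ c → g t ≤ b)
    (x : X _⦋a⦌) :
    simpOp X g b c (simpOp X f a b x) = simpOp X (f ∘ g) a c x := by
  unfold simpOp
  rw [← FunctorToTypes.map_comp_apply, ← op_comp,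
    mkHomF_comp a b c f g hf hg hfb hgc]

lemma grpOp_comp (G : CategoryTheory.SimplicialObject GrpCat) (f g : ℕ → ℕ) (a b c : ℕ)
    (hf : Monotone f) (hg : Monotone g) (hfb : ∀ t, t ≤ b → f t ≤ a)
    (hgc : ∀ t, t ≤ c → g t ≤ b) (z : G _⦋a⦌) :
    grpOp G g b c (grpOp G f a b z) = grpOp G (f ∘ g) a c z := by
  unfold grpOp
  rw [← mkHomF_comp a b c f g hf hg hfb hgc, op_comp, G.map_comp]
  rfl

lemma grpOp_congr (G : CategoryTheory.SimplicialObject GrpCat) (f g : ℕ → ℕ) (a b : ℕ)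
    (h : ∀ t, f t = g t) (z : G _⦋a⦌) : grpOp G f a b z = grpOp G g a b z := by
  unfold grpOp
  rw [mkHomF_congr a b f g h]

lemma simpOp_congr (X : SSet) (f g : ℕ → ℕ) (a b : ℕ)
    (h : ∀ t, f t = g t) (x : X _⦋a⦌) : simpOp X f a b x = simpOp X g a b x := by
  unfold simpOp
  rw [mkHomF_congr a b f g h]

lemma grpOp_inv (G : CategoryTheory.SimplicialObject GrpCat) (f : ℕ → ℕ) (a b : ℕ)
    (z : G _⦋a⦌) : grpOp G f a b (z⁻¹) = (grpOp G f a b z)⁻¹ :=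
  map_inv _ _

lemma grpOp_prod (G : CategoryTheory.SimplicialObject GrpCat) (f : ℕ → ℕ) (a b : ℕ)
    (L : List (G _⦋a⦌)) : grpOp G f a b L.prod = (L.map (grpOp G f a b)).prod :=
  map_list_prod _ _

end Cat

section Factors

open CategoryTheory

lemma monotone_addRight (r : ℕ) : Monotone (fun t => t + r) :=
  fun a b h => by dsimp only; omega

lemma grpOp_one (G : CategoryTheory.SimplicialObject GrpCat) (f : ℕ → ℕ) (a b : ℕ) :
    grpOp G f a b 1 = 1 :=
  map_one _

lemma factor_lt (X : SSet) (G : CategoryTheory.SimplicialObject GrpCat)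
    (τ : TwistingFn X G) (n p r : ℕ) (hp : p ≤ n + 1) (hr : r < p)
    (i : List ℕ) (hi : memS (n + 1) (n + 1) i) (x : X _⦋n + 1⦌) :
    grpOp G (DFun i r) ((n - r) + 1) (n + 1)
      ((τ.map ((n - r) + 1) (simpOp X (fun t => t + r) (n + 1 + 1) ((n - r) + 1 + 1)
        (simpOp X (sigmaFun p) (n + 1) (n + 1 + 1) x)))⁻¹)
    = grpOp G (sigmaFun (Phi i p).2) n (n + 1)
        (grpOp G (DFun (Phi i p).1 r) (n - r) n
          ((τ.map (n - r) (simpOp X (fun t => t + r) (n + 1) ((n - r) + 1) x))⁻¹)) := by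
  obtain ⟨hj, hq⟩ := Phi_spec i n p hi hp
  have hrn : r ≤ n := by omega
  have e1 : simpOp X (fun t => t + r) (n + 1 + 1) ((n - r) + 1 + 1)
      (simpOp X (sigmaFun p) (n + 1) (n + 1 + 1) x)
      = simpOp X (sigmaFun p ∘ fun t => t + r) (n + 1) ((n - r) + 1 + 1) x :=
    simpOp_comp X (sigmaFun p) (fun t => t + r) (n + 1) (n + 1 + 1) ((n - r) + 1 + 1)
      (monotone_sigmaFun p) (monotone_addRight r)
      (fun t ht => by simp only [sigmaFun]; split_ifs <;> omega)
      (fun t ht => by omega) x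
  have e2 : simpOp X (sigmaFun p ∘ fun t => t + r) (n + 1) ((n - r) + 1 + 1) x
      = simpOp X ((fun t => t + r) ∘ sigmaFun (p - r)) (n + 1) ((n - r) + 1 + 1) x :=
    simpOp_congr X _ _ _ _
      (fun t => by simp only [Function.comp, sigmaFun]; split_ifs <;> omega) x
  have e3 : simpOp X ((fun t => t + r) ∘ sigmaFun (p - r)) (n + 1) ((n - r) + 1 + 1) x
      = simpOp X (sigmaFun (p - r)) ((n - r) + 1) ((n - r) + 1 + 1)
          (simpOp X (fun t => t + r) (n + 1) ((n - r) + 1) x) :=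
    (simpOp_comp X (fun t => t + r) (sigmaFun (p - r)) (n + 1) ((n - r) + 1)
      ((n - r) + 1 + 1) (monotone_addRight r) (monotone_sigmaFun _)
      (fun t ht => by omega)
      (fun t ht => by simp only [sigmaFun]; split_ifs <;> omega) x).symm
  have e4 := τ.sk (n - r) (p - r - 1)
    (simpOp X (fun t => t + r) (n + 1) ((n - r) + 1) x) (by omega)
  rw [show p - r - 1 + 1 = p - r from by omega] at e4
  have e4' : grpOp G (sigmaFun (p - r - 1)) (n - r) ((n - r) + 1)
      (τ.map (n - r) (simpOp X (fun t => t + r) (n + 1) ((n - r) + 1) x))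
      = τ.map ((n - r) + 1) (simpOp X (sigmaFun (p - r)) ((n - r) + 1) ((n - r) + 1 + 1)
          (simpOp X (fun t => t + r) (n + 1) ((n - r) + 1) x)) := e4
  rw [e1, e2, e3, ← e4', ← grpOp_inv,
    grpOp_comp G (sigmaFun (p - r - 1)) (DFun i r) (n - r) ((n - r) + 1) (n + 1)
      (monotone_sigmaFun _) (monotone_DFun i r)
      (fun t ht => by simp only [sigmaFun]; split_ifs <;> omega)
      (fun t ht => by
        have := DFun_bound i (n + 1) r t hi (by omega) ht
        omega)]
  have hi' : memS i.length i.length i := by rw [hi.1]; exact hi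
  have hkey : ∀ t, (sigmaFun (p - r - 1) ∘ DFun i r) t
      = (DFun (Phi i p).1 r ∘ sigmaFun (Phi i p).2) t := by
    intro t
    have := keyB i p r hi' (by rw [hi.1]; exact hp) hr t
    simpa [Function.comp] using this
  rw [grpOp_congr G _ _ _ _ hkey,
    ← grpOp_comp G (DFun (Phi i p).1 r) (sigmaFun (Phi i p).2) (n - r) n (n + 1)
      (monotone_DFun _ r) (monotone_sigmaFun _)
      (fun t ht => DFun_bound (Phi i p).1 n r t hj (by omega) ht)
      (fun t ht => by simp only [sigmaFun]; split_ifs <;> omega)]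

lemma factor_mid (X : SSet) (G : CategoryTheory.SimplicialObject GrpCat)
    (τ : TwistingFn X G) (n p : ℕ) (hp : p ≤ n + 1) (i : List ℕ) (x : X _⦋n + 1⦌) :
    grpOp G (DFun i p) (n + 1 - p) (n + 1)
      ((τ.map (n + 1 - p) (simpOp X (fun t => t + p) (n + 1 + 1) ((n + 1 - p) + 1)
        (simpOp X (sigmaFun p) (n + 1) (n + 1 + 1) x)))⁻¹) = 1 := by
  have e1 : simpOp X (fun t => t + p) (n + 1 + 1) ((n + 1 - p) + 1)
      (simpOp X (sigmaFun p) (n + 1) (n + 1 + 1) x)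
      = simpOp X (sigmaFun p ∘ fun t => t + p) (n + 1) ((n + 1 - p) + 1) x :=
    simpOp_comp X (sigmaFun p) (fun t => t + p) (n + 1) (n + 1 + 1) ((n + 1 - p) + 1)
      (monotone_sigmaFun p) (monotone_addRight p)
      (fun t ht => by simp only [sigmaFun]; split_ifs <;> omega)
      (fun t ht => by omega) x
  have e2 : simpOp X (sigmaFun p ∘ fun t => t + p) (n + 1) ((n + 1 - p) + 1) x
      = simpOp X ((fun t => t + p) ∘ sigmaFun 0) (n + 1) ((n + 1 - p) + 1) x :=
    simpOp_congr X _ _ _ _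
      (fun t => by simp only [Function.comp, sigmaFun]; split_ifs <;> omega) x
  have e3 : simpOp X ((fun t => t + p) ∘ sigmaFun 0) (n + 1) ((n + 1 - p) + 1) x
      = simpOp X (sigmaFun 0) (n + 1 - p) ((n + 1 - p) + 1)
          (simpOp X (fun t => t + p) (n + 1) (n + 1 - p) x) :=
    (simpOp_comp X (fun t => t + p) (sigmaFun 0) (n + 1) (n + 1 - p)
      ((n + 1 - p) + 1) (monotone_addRight p) (monotone_sigmaFun _)
      (fun t ht => by omega)
      (fun t ht => by simp only [sigmaFun]; split_ifs <;> omega) x).symm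
  rw [e1, e2, e3, τ.s0 (n + 1 - p) (simpOp X (fun t => t + p) (n + 1) (n + 1 - p) x),
    inv_one, grpOp_one]

lemma factor_gt (X : SSet) (G : CategoryTheory.SimplicialObject GrpCat)
    (τ : TwistingFn X G) (n p r' : ℕ) (hp : p ≤ n + 1) (hr1 : p ≤ r') (hr2 : r' ≤ n)
    (i : List ℕ) (hi : memS (n + 1) (n + 1) i) (x : X _⦋n + 1⦌) :
    grpOp G (DFun i (r' + 1)) (n - r') (n + 1)
      ((τ.map (n - r') (simpOp X (fun t => t + (r' + 1)) (n + 1 + 1) ((n - r') + 1)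
        (simpOp X (sigmaFun p) (n + 1) (n + 1 + 1) x)))⁻¹)
    = grpOp G (sigmaFun (Phi i p).2) n (n + 1)
        (grpOp G (DFun (Phi i p).1 r') (n - r') n
          ((τ.map (n - r') (simpOp X (fun t => t + r') (n + 1) ((n - r') + 1) x))⁻¹)) := by
  obtain ⟨hj, hq⟩ := Phi_spec i n p hi hp
  have e1 : simpOp X (fun t => t + (r' + 1)) (n + 1 + 1) ((n - r') + 1)
      (simpOp X (sigmaFun p) (n + 1) (n + 1 + 1) x)
      = simpOp X (sigmaFun p ∘ fun t => t + (r' + 1)) (n + 1) ((n - r') + 1) x :=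
    simpOp_comp X (sigmaFun p) (fun t => t + (r' + 1)) (n + 1) (n + 1 + 1)
      ((n - r') + 1) (monotone_sigmaFun p) (monotone_addRight _)
      (fun t ht => by simp only [sigmaFun]; split_ifs <;> omega)
      (fun t ht => by omega) x
  have e2 : simpOp X (sigmaFun p ∘ fun t => t + (r' + 1)) (n + 1) ((n - r') + 1) x
      = simpOp X (fun t => t + r') (n + 1) ((n - r') + 1) x :=
    simpOp_congr X _ _ _ _
      (fun t => by simp only [Function.comp, sigmaFun]; split_ifs <;> omega) x
  rw [e1, e2]
  have hi' : memS i.length i.length i := by rw [hi.1]; exact hi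
  have hkey : ∀ t, DFun i (r' + 1) t
      = (DFun (Phi i p).1 r' ∘ sigmaFun (Phi i p).2) t := by
    intro t
    have := keyA i p (r' + 1) hi' (by rw [hi.1]; exact hp) (by omega)
      (by rw [hi.1]; omega) t
    rw [show r' + 1 - 1 = r' from by omega] at this
    simpa [Function.comp] using this
  rw [grpOp_congr G _ _ _ _ hkey,
    ← grpOp_comp G (DFun (Phi i p).1 r') (sigmaFun (Phi i p).2) (n - r') n (n + 1)
      (monotone_DFun _ r') (monotone_sigmaFun _)
      (fun t ht => DFun_bound (Phi i p).1 n r' t hj (by omega) ht)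
      (fun t ht => by simp only [sigmaFun]; split_ifs <;> omega)]

end Factors

/-- For a twisting function `τ : X_{>0} → G`, an `n`-simplex
`x` with `n ≥ 1` (here `x ∈ X_{n+1}` with `n ≥ 0`), `0 ≤ p ≤ n+1`, `i ∈ S_{n+1}`
and `(j, q) = Φ(i, p)` one has `Sz_i (s_p x) = s_q (Sz_j x)` in `G_{n+1}`. -/
theorem szczarba_Sz_degeneracy (X : SSet) (G : CategoryTheory.SimplicialObject GrpCat)
    (τ : TwistingFn X G) (n : ℕ) (p : ℕ) (hp : p ≤ n + 1)
    (i : List ℕ) (hi : memS (n + 1) (n + 1) i) (x : X _⦋n + 1⦌) :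
    Sz τ (n + 1) i (simpOp X (sigmaFun p) (n + 1) (n + 2) x)
      = grpOp G (sigmaFun (Phi i p).2) n (n + 1) (Sz τ n (Phi i p).1 x) := by
  show ((List.range (n + 1 + 1)).map (fun r => grpOp G (DFun i r) (n + 1 - r) (n + 1)
      ((τ.map (n + 1 - r) (simpOp X (fun t => t + r) (n + 1 + 1) ((n + 1 - r) + 1)
        (simpOp X (sigmaFun p) (n + 1) (n + 1 + 1) x)))⁻¹))).prod
    = grpOp G (sigmaFun (Phi i p).2) n (n + 1) (((List.range (n + 1)).map (fun r =>
        grpOp G (DFun (Phi i p).1 r) (n - r) n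
          ((τ.map (n - r) (simpOp X (fun t => t + r) (n + 1) ((n - r) + 1) x))⁻¹))).prod)
  rw [grpOp_prod, List.map_map]
  have hL : List.range (n + 1 + 1)
      = (List.range p ++ (p :: ([] : List ℕ)))
          ++ (List.range (n + 1 - p)).map (fun s => p + 1 + s) := by
    conv_lhs => rw [show n + 1 + 1 = (p + 1) + (n + 1 - p) from by omega]
    rw [List.range_add, List.range_succ]
  have hR : List.range (n + 1)
      = List.range p ++ (List.range (n + 1 - p)).map (fun s => p + s) := by
    conv_lhs => rw [show n + 1 = p + (n + 1 - p) from by omega]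
    rw [List.range_add]
  rw [hL, hR]
  simp only [List.map_append, List.prod_append, List.map_map, List.map_cons,
    List.map_nil, List.prod_cons, List.prod_nil, Function.comp_def]
  have hA : List.map (fun r => grpOp G (DFun i r) (n + 1 - r) (n + 1)
        ((τ.map (n + 1 - r) (simpOp X (fun t => t + r) (n + 1 + 1) (n + 1 - r + 1)
          (simpOp X (sigmaFun p) (n + 1) (n + 1 + 1) x)))⁻¹)) (List.range p)
      = List.map (fun r => grpOp G (sigmaFun (Phi i p).2) n (n + 1)
          (grpOp G (DFun (Phi i p).1 r) (n - r) n
            ((τ.map (n - r) (simpOp X (fun t => t + r) (n + 1) (n - r + 1) x))⁻¹)))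
          (List.range p) := by
    apply List.map_congr_left
    intro r hrmem
    have hr : r < p := List.mem_range.mp hrmem
    rw [show n + 1 - r = (n - r) + 1 from by omega]
    exact factor_lt X G τ n p r hp hr i hi x
  have hB : List.map (fun s => grpOp G (DFun i (p + 1 + s)) (n + 1 - (p + 1 + s)) (n + 1)
        ((τ.map (n + 1 - (p + 1 + s)) (simpOp X (fun t => t + (p + 1 + s)) (n + 1 + 1)
          (n + 1 - (p + 1 + s) + 1)
          (simpOp X (sigmaFun p) (n + 1) (n + 1 + 1) x)))⁻¹)) (List.range (n + 1 - p))
      = List.map (fun s => grpOp G (sigmaFun (Phi i p).2) n (n + 1)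
          (grpOp G (DFun (Phi i p).1 (p + s)) (n - (p + s)) n
            ((τ.map (n - (p + s)) (simpOp X (fun t => t + (p + s)) (n + 1)
              (n - (p + s) + 1) x))⁻¹))) (List.range (n + 1 - p)) := by
    apply List.map_congr_left
    intro s hsmem
    have hs : s < n + 1 - p := List.mem_range.mp hsmem
    rw [show p + 1 + s = (p + s) + 1 from by omega,
      show n + 1 - (p + s + 1) = n - (p + s) from by omega]
    exact factor_gt X G τ n p (p + s) hp (by omega) (by omega) i hi x
  have hmid : grpOp G (DFun i p) (n + 1 - p) (n + 1)
      ((τ.map (n + 1 - p) (simpOp X (fun t => t + p) (n + 1 + 1) ((n + 1 - p) + 1)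
        (simpOp X (sigmaFun p) (n + 1) (n + 1 + 1) x)))⁻¹) = 1 :=
    factor_mid X G τ n p hp i x
  rw [hA, hB, hmid, mul_one, mul_one]
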